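/- Let 0 < P_fa < P_d < 1, α ∈ (0,1], p ∈ (0,1], and β'_{1,0}, β'_{0,1} ≥ 0 with β'_{1,0} + α p < 1/2 and β'_{0,1} + α p < 1/2. For ε ∈ [0,p] set β_{1,0} = β'_{1,0} + α p, β_{0,1}(ε) = β'_{0,1} + α(p−ε), π_{1,1}(ε) = β_{1,0}(1−P_d) + (1−β_{0,1}(ε))P_d and π_{1,0}(ε) = β_{1,0}(1−P_fa) + (1−β_{0,1}(ε))P_fa. Then the Bernoulli Kullback–Leibler divergence D_k(ε) = π_{1,0}(ε) log(π_{1,0}(ε)/π_{1,1}(ε)) + (1−π_{1,0}(ε)) log((1−π_{1,0}(ε))/(1−π_{1,1}(ε))) is strictly increasing in ε on [0,p]. That is, deviating from symmetric flipping probabilities (P_{1,0}, P_{0,1}) = (p,p) to (p, p−ε) with ε > 0 strictly increases D_k. -/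

import Mathlib

set_option maxHeartbeats 1600000


/-- Probability of receiving a 1, given aggregate flipping probabilities
`β₁₀`, `β₀₁` and local decision probability `P`. -/
noncomputable def piProb (β10 β01 P : ℝ) : ℝ := β10 * (1 - P) + (1 - β01) * P

/-- Bernoulli Kullback–Leibler divergence between success probabilities `a` and `b`. -/
noncomputable def klBern (a b : ℝ) : ℝ :=
  a * Real.log (a / b) + (1 - a) * Real.log ((1 - a) / (1 - b))

/-- Deviating from the symmetric flipping strategy `(p, p)` to `(p, p − ε)` strictly
increases the level-`k` KL divergence: `D_k(ε)` is strictly increasing on `[0, p]`. -/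
theorem stmt_4 (Pfa Pd α p β10' β01' : ℝ)
    (hPfa : 0 < Pfa) (hPfaPd : Pfa < Pd) (hPd : Pd < 1)
    (hα : α ∈ Set.Ioc (0 : ℝ) 1) (hp : p ∈ Set.Ioc (0 : ℝ) 1)
    (hβ10' : 0 ≤ β10') (hβ01' : 0 ≤ β01')
    (h10 : β10' + α * p < 1 / 2) (h01 : β01' + α * p < 1 / 2) :
    StrictMonoOn
      (fun ε : ℝ =>
        klBern (piProb (β10' + α * p) (β01' + α * (p - ε)) Pfa)
               (piProb (β10' + α * p) (β01' + α * (p - ε)) Pd))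
      (Set.Icc 0 p) := by
  obtain ⟨hα0, hα1⟩ := hα
  obtain ⟨hp0, hp1⟩ := hp
  have hPd0 : 0 < Pd := lt_trans hPfa hPfaPd
  have hPfa1 : Pfa < 1 := lt_trans hPfaPd hPd
  have hαp : 0 < α * p := mul_pos hα0 hp0
  have hβ10pos : 0 < β10' + α * p := by linarith
  simp only [klBern, piProb]
  have hfacts : ∀ ε ∈ Set.Icc (0:ℝ) p,
      0 < (β10' + α * p) * (1 - Pfa) + (1 - (β01' + α * (p - ε))) * Pfa ∧
      (β10' + α * p) * (1 - Pfa) + (1 - (β01' + α * (p - ε))) * Pfa <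
        (β10' + α * p) * (1 - Pd) + (1 - (β01' + α * (p - ε))) * Pd ∧
      (β10' + α * p) * (1 - Pd) + (1 - (β01' + α * (p - ε))) * Pd < 1 := by
    intro ε hε
    obtain ⟨hε0, hεp⟩ := hε
    have hc0 : 0 ≤ β01' + α * (p - ε) := by nlinarith
    have hc2 : β01' + α * (p - ε) < 1/2 := by nlinarith
    refine ⟨?_, ?_, ?_⟩
    · nlinarith [mul_pos hβ10pos (show (0:ℝ) < 1 - Pfa by linarith),
        mul_pos (show (0:ℝ) < 1 - (β01' + α * (p - ε)) by linarith) hPfa]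
    · nlinarith [mul_pos (sub_pos.mpr hPfaPd)
        (show (0:ℝ) < 1 - (β01' + α * (p - ε)) - (β10' + α * p) by linarith)]
    · nlinarith [mul_nonneg hc0 hPd0.le,
        mul_pos (show (0:ℝ) < 1 - (β10' + α * p) by linarith)
          (show (0:ℝ) < 1 - Pd by linarith)]
  have hcA : Continuous (fun ε : ℝ =>
      (β10' + α * p) * (1 - Pfa) + (1 - (β01' + α * (p - ε))) * Pfa) := by fun_prop
  have hcB : Continuous (fun ε : ℝ =>
      (β10' + α * p) * (1 - Pd) + (1 - (β01' + α * (p - ε))) * Pd) := by fun_prop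
  apply strictMonoOn_of_deriv_pos (convex_Icc 0 p)
  · apply ContinuousOn.add
    · refine hcA.continuousOn.mul (ContinuousOn.log
        (hcA.continuousOn.div hcB.continuousOn ?_) ?_)
      · intro x hx
        exact ne_of_gt ((hfacts x hx).1.trans (hfacts x hx).2.1)
      · intro x hx
        exact ne_of_gt (div_pos (hfacts x hx).1 ((hfacts x hx).1.trans (hfacts x hx).2.1))
    · refine ContinuousOn.mul ?_ (ContinuousOn.log (ContinuousOn.div ?_ ?_ ?_) ?_)
      · exact (continuous_const.sub hcA).continuousOn
      · exact (continuous_const.sub hcA).continuousOn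
      · exact (continuous_const.sub hcB).continuousOn
      · intro x hx
        have := (hfacts x hx).2.2
        have h2 := (hfacts x hx).2.1
        intro h; nlinarith
      · intro x hx
        have hb1 := (hfacts x hx).2.2
        have hab := (hfacts x hx).2.1
        have ha0 := (hfacts x hx).1
        exact ne_of_gt (div_pos (by nlinarith) (by nlinarith))
  · intro x hx
    rw [interior_Icc] at hx
    obtain ⟨hx0, hxp⟩ := hx
    obtain ⟨ha0, hab, hb1⟩ := hfacts x ⟨le_of_lt hx0, le_of_lt hxp⟩
    have hb0 := ha0.trans hab
    have ha1 := hab.trans hb1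
    have hane := ne_of_gt ha0
    have hbne := ne_of_gt hb0
    have h1ane : 1 - ((β10' + α * p) * (1 - Pfa) + (1 - (β01' + α * (p - x))) * Pfa) ≠ 0 := by
      intro h; nlinarith
    have h1bne : 1 - ((β10' + α * p) * (1 - Pd) + (1 - (β01' + α * (p - x))) * Pd) ≠ 0 := by
      intro h; nlinarith
    have hA' : HasDerivAt (fun ε : ℝ =>
        (β10' + α * p) * (1 - Pfa) + (1 - (β01' + α * (p - ε))) * Pfa) (α * Pfa) x := by
      have h1 : HasDerivAt (fun ε : ℝ => p - ε) (-1 : ℝ) x := by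
        simpa using (hasDerivAt_id x).const_sub p
      have h2 := (((h1.const_mul α).const_add β01').const_sub 1).mul_const Pfa
      simpa using h2.const_add ((β10' + α * p) * (1 - Pfa))
    have hB' : HasDerivAt (fun ε : ℝ =>
        (β10' + α * p) * (1 - Pd) + (1 - (β01' + α * (p - ε))) * Pd) (α * Pd) x := by
      have h1 : HasDerivAt (fun ε : ℝ => p - ε) (-1 : ℝ) x := by
        simpa using (hasDerivAt_id x).const_sub p
      have h2 := (((h1.const_mul α).const_add β01').const_sub 1).mul_const Pd
      simpa using h2.const_add ((β10' + α * p) * (1 - Pd))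
    have d2 := (hA'.div hB' hbne).log (div_ne_zero hane hbne)
    have d3 := hA'.mul d2
    have hA1 := hA'.const_sub 1
    have hB1 := hB'.const_sub 1
    have d5 := (hA1.div hB1 h1bne).log (div_ne_zero h1ane h1bne)
    have d6 := hA1.mul d5
    have dtot := d3.add d6
    erw [dtot.deriv]
    simp only [Pi.div_apply]
    set a : ℝ := (β10' + α * p) * (1 - Pfa) + (1 - (β01' + α * (p - x))) * Pfa with ha_def
    set b : ℝ := (β10' + α * p) * (1 - Pd) + (1 - (β01' + α * (p - x))) * Pd with hb_def
    have hrel : Pd * a - Pfa * b = (β10' + α * p) * (Pd - Pfa) := by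
      rw [ha_def, hb_def]; ring
    clear_value a b
    clear dtot d2 d3 d5 d6 hA' hB' hA1 hB1
    have h1a0 : 0 < 1 - a := by linarith
    have h1b0 : 0 < 1 - b := by linarith
    have key : (a - b) / (a * (1 - b)) < Real.log (a / b) - Real.log ((1 - a) / (1 - b)) := by
      have hy0 : 0 < b * (1 - a) / (a * (1 - b)) := by positivity
      have hy1 : b * (1 - a) / (a * (1 - b)) ≠ 1 := by
        have hlt : a * (1 - b) < b * (1 - a) := by nlinarith
        intro h
        rw [div_eq_one_iff_eq (by positivity)] at h
        linarith
      have hlt := Real.log_lt_sub_one_of_pos hy0 hy1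
      have e1 : Real.log (b * (1 - a) / (a * (1 - b)))
          = Real.log b + Real.log (1 - a) - (Real.log a + Real.log (1 - b)) := by
        rw [Real.log_div (by positivity) (by positivity),
          Real.log_mul hbne h1ane, Real.log_mul hane h1bne]
      have e2 : Real.log (a / b) = Real.log a - Real.log b := Real.log_div hane hbne
      have e3 : Real.log ((1 - a) / (1 - b)) = Real.log (1 - a) - Real.log (1 - b) :=
        Real.log_div h1ane h1bne
      have e4 : b * (1 - a) / (a * (1 - b)) - 1 = (b - a) / (a * (1 - b)) := by
        field_simp
        ring
      have e5 : (a - b) / (a * (1 - b)) = -((b - a) / (a * (1 - b))) := by ring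
      rw [e2, e3, e5]
      rw [e1, e4] at hlt
      linarith
    have hsimp : α * Pfa * Real.log (a / b) +
          a * ((α * Pfa * b - a * (α * Pd)) / b ^ 2 / (a / b)) +
          (-(α * Pfa) * Real.log ((1 - a) / (1 - b)) +
            (1 - a) * ((-(α * Pfa) * (1 - b) - (1 - a) * -(α * Pd)) / (1 - b) ^ 2 / ((1 - a) / (1 - b))))
        = α * Pfa * (Real.log (a / b) - Real.log ((1 - a) / (1 - b)))
          + α * Pd * ((b - a) / (b * (1 - b))) := by
      field_simp
      ring
    rw [hsimp]
    have hfinal : 0 < α * Pfa * ((a - b) / (a * (1 - b))) + α * Pd * ((b - a) / (b * (1 - b))) := by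
      have heq : α * Pfa * ((a - b) / (a * (1 - b))) + α * Pd * ((b - a) / (b * (1 - b)))
          = α * (b - a) * (Pd * a - Pfa * b) / (a * b * (1 - b)) := by
        field_simp
        ring
      rw [heq]
      rw [hrel]
      apply div_pos
      · exact mul_pos (mul_pos hα0 (sub_pos.mpr hab)) (mul_pos hβ10pos (sub_pos.mpr hPfaPd))
      · positivity
    have hmul := mul_lt_mul_of_pos_left key (mul_pos hα0 hPfa)
    nlinarith [hmul, hfinal]
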